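/- arXiv:1603.08156 — 5 statements merged into one kernel-verified Lean document; each statement's English description precedes it below -/
import Mathlib

section
/- Fix M ≥ 2, n ∈ ℕ, and let Π(x,y) = x+y. Let A_n ⊆ [0,1) be any union of M-adic intervals of generation n and define Y_n^u = β_n² · H¹(Π^{-1}(u) ∩ (A_n × A_n)). Then u ↦ Y_n^u is affine (linear) on each M-adic interval of generation n contained in [0,1) and on each M-adic interval of generation n contained in [1,2). -/
open MeasureTheory Set
open scoped ENNReal

/-- The union of the generation-`n` `M`-adic intervals indexed by `S`. -/
def adicUnion (M n : ℕ) (S : Finset ℕ) : Set ℝ :=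
  ⋃ j ∈ S, Set.Ico ((j : ℝ) / (M : ℝ) ^ n) (((j : ℝ) + 1) / (M : ℝ) ^ n)

/-- `Y_n^u = β² · H¹(Π⁻¹(u) ∩ (A × A))` where `A` is the union of the `M`-adic
intervals indexed by `S` and `Π(x,y) = x + y`. -/
noncomputable def Yfun (M n : ℕ) (S : Finset ℕ) (β : ℝ) (u : ℝ) : ℝ :=
  β ^ 2 * ((μH[1] : Measure (ℝ × ℝ))
    ({p : ℝ × ℝ | p.1 + p.2 = u} ∩ (adicUnion M n S ×ˢ adicUnion M n S))).toReal

lemma volume_Ico_inter_Ioc (a b c d : ℝ) :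
    volume (Ico a b ∩ Ioc c d) = ENNReal.ofReal (min b d - max a c) := by
  apply le_antisymm
  · calc volume (Ico a b ∩ Ioc c d) ≤ volume (Icc (max a c) (min b d)) := by
          apply measure_mono
          rintro x ⟨⟨h1, h2⟩, h3, h4⟩
          exact ⟨max_le h1 h3.le, le_min h2.le h4⟩
      _ = _ := Real.volume_Icc
  · calc ENNReal.ofReal (min b d - max a c) = volume (Ioo (max a c) (min b d)) :=
          Real.volume_Ioo.symm
      _ ≤ _ := by
          apply measure_mono
          rintro x ⟨h1, h2⟩
          exact ⟨⟨(le_max_left a c).trans h1.le, h2.trans_le (min_le_left b d)⟩,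
            (le_max_right a c).trans_lt h1, h2.le.trans (min_le_right b d)⟩

lemma key_val (c : ℝ) (hc : 0 < c) (u : ℝ) (k i i' : ℕ)
    (hu1 : (k : ℝ) / c ≤ u) (hu2 : u < ((k : ℝ) + 1) / c) :
    volume (Ico ((i : ℝ) / c) (((i : ℝ) + 1) / c) ∩
        Ioc (u - ((i' : ℝ) + 1) / c) (u - (i' : ℝ) / c))
      = ENNReal.ofReal (if i + i' = k then u - (k : ℝ) / c
          else if i + i' + 1 = k then ((k : ℝ) + 1) / c - u else 0) := by
  rw [volume_Ico_inter_Ioc]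
  by_cases h0 : i + i' = k
  · have hik : (i : ℝ) + (i' : ℝ) = (k : ℝ) := by exact_mod_cast congrArg (Nat.cast (R := ℝ)) h0
    rw [if_pos h0]
    have h1 : u - (i' : ℝ) / c ≤ ((i : ℝ) + 1) / c := by
      rw [sub_le_iff_le_add, ← add_div,
        show (i : ℝ) + 1 + (i' : ℝ) = (k : ℝ) + 1 by linarith]
      exact hu2.le
    have h2 : u - ((i' : ℝ) + 1) / c ≤ (i : ℝ) / c := by
      rw [sub_le_iff_le_add, ← add_div,
        show (i : ℝ) + ((i' : ℝ) + 1) = (k : ℝ) + 1 by linarith]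
      exact hu2.le
    rw [min_eq_right h1, max_eq_left h2]
    congr 1
    rw [sub_sub, ← add_div, show (i' : ℝ) + (i : ℝ) = (k : ℝ) by linarith]
  · by_cases h1 : i + i' + 1 = k
    · have hik : (i : ℝ) + (i' : ℝ) + 1 = (k : ℝ) := by
        exact_mod_cast congrArg (Nat.cast (R := ℝ)) h1
      rw [if_neg h0, if_pos h1]
      have hm1 : ((i : ℝ) + 1) / c ≤ u - (i' : ℝ) / c := by
        rw [le_sub_iff_add_le, ← add_div,
          show (i : ℝ) + 1 + (i' : ℝ) = (k : ℝ) by linarith]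
        exact hu1
      have hm2 : (i : ℝ) / c ≤ u - ((i' : ℝ) + 1) / c := by
        rw [le_sub_iff_add_le, ← add_div,
          show (i : ℝ) + ((i' : ℝ) + 1) = (k : ℝ) by linarith]
        exact hu1
      rw [min_eq_left hm1, max_eq_right hm2]
      congr 1
      have he : ((i : ℝ) + 1) / c + ((i' : ℝ) + 1) / c = ((k : ℝ) + 1) / c := by
        rw [← add_div, show (i : ℝ) + 1 + ((i' : ℝ) + 1) = (k : ℝ) + 1 by linarith]
      linarith
    · rw [if_neg h0, if_neg h1, ENNReal.ofReal_zero]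
      rw [ENNReal.ofReal_eq_zero]
      rcases (by omega : k + 1 ≤ i + i' ∨ i + i' + 2 ≤ k) with h | h
      · have hR : (k : ℝ) + 1 ≤ (i : ℝ) + (i' : ℝ) := by exact_mod_cast h
        have e1 : (i' : ℝ) / c + (i : ℝ) / c = ((i' : ℝ) + (i : ℝ)) / c := (add_div _ _ _).symm
        have e2 : ((k : ℝ) + 1) / c ≤ ((i' : ℝ) + (i : ℝ)) / c :=
          (div_le_div_iff_of_pos_right hc).mpr (by linarith)
        linarith [min_le_right (((i : ℝ) + 1) / c) (u - (i' : ℝ) / c),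
          le_max_left ((i : ℝ) / c) (u - ((i' : ℝ) + 1) / c)]
      · have hR : (i : ℝ) + (i' : ℝ) + 2 ≤ (k : ℝ) := by exact_mod_cast h
        have e1 : ((i : ℝ) + 1) / c + ((i' : ℝ) + 1) / c
            = ((i : ℝ) + 1 + ((i' : ℝ) + 1)) / c := (add_div _ _ _).symm
        have e2 : ((i : ℝ) + 1 + ((i' : ℝ) + 1)) / c ≤ (k : ℝ) / c :=
          (div_le_div_iff_of_pos_right hc).mpr (by linarith)
        linarith [min_le_left (((i : ℝ) + 1) / c) (u - (i' : ℝ) / c),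
          le_max_right ((i : ℝ) / c) (u - ((i' : ℝ) + 1) / c)]

/-- If `A_n ⊆ [0,1)` is a union of generation-`n` `M`-adic intervals,
then `u ↦ Y_n^u = β² H¹({x+y=u} ∩ (A_n × A_n))` is affine on each generation-`n`
`M`-adic interval contained in `[0,2)`. -/
theorem Yfun_affine_on_adic_intervals
    (M n : ℕ) (hM : 2 ≤ M) (β : ℝ) (hβ : 1 ≤ β)
    (S : Finset ℕ) (hS : ∀ j ∈ S, j < M ^ n) :
    ∀ j : ℕ, j < 2 * M ^ n → ∃ a b : ℝ,
      ∀ u ∈ Set.Ico ((j : ℝ) / (M : ℝ) ^ n) (((j : ℝ) + 1) / (M : ℝ) ^ n),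
        Yfun M n S β u = a * u + b := by
  intro k _
  have hc : (0 : ℝ) < (M : ℝ) ^ n := by
    have : (0 : ℝ) < (M : ℝ) := by exact_mod_cast (by omega : 0 < M)
    positivity
  set c : ℝ := (M : ℝ) ^ n with hcdef
  set N₀ : ℕ := ((S ×ˢ S).filter (fun p => p.1 + p.2 = k)).card with hN₀
  set N₁ : ℕ := ((S ×ˢ S).filter (fun p => p.1 + p.2 + 1 = k)).card with hN₁
  refine ⟨β ^ 2 * ((N₀ : ℝ) - (N₁ : ℝ)),
    β ^ 2 * ((N₁ : ℝ) * (((k : ℝ) + 1) / c) - (N₀ : ℝ) * ((k : ℝ) / c)), ?_⟩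
  rintro u ⟨hu1, hu2⟩
  have hIso : Isometry (fun x : ℝ => (x, u - x)) := by
    apply Isometry.of_dist_eq
    intro x y
    simp only [Prod.dist_eq, Real.dist_eq]
    rw [show u - x - (u - y) = -(x - y) by ring, abs_neg, max_self]
  have hImg : {p : ℝ × ℝ | p.1 + p.2 = u} ∩ (adicUnion M n S ×ˢ adicUnion M n S)
      = (fun x : ℝ => (x, u - x)) ''
        (adicUnion M n S ∩ {x : ℝ | u - x ∈ adicUnion M n S}) := by
    ext p
    simp only [mem_inter_iff, mem_setOf_eq, mem_prod, mem_image]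
    constructor
    · rintro ⟨hsum, hx, hy⟩
      refine ⟨p.1, ⟨hx, ?_⟩, ?_⟩
      · rw [show u - p.1 = p.2 by linarith]; exact hy
      · exact Prod.ext rfl (by dsimp; linarith)
    · rintro ⟨z, ⟨hz1, hz2⟩, hzp⟩
      rw [← hzp]
      exact ⟨by dsimp; ring, hz1, by dsimp; convert hz2 using 2⟩
  have hmeas : (μH[1] : Measure (ℝ × ℝ))
      ({p : ℝ × ℝ | p.1 + p.2 = u} ∩ (adicUnion M n S ×ˢ adicUnion M n S))
      = volume (adicUnion M n S ∩ {x : ℝ | u - x ∈ adicUnion M n S}) := by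
    rw [hImg, hIso.hausdorffMeasure_image (Or.inl zero_le_one), hausdorffMeasure_real]
  have hdecomp : adicUnion M n S ∩ {x : ℝ | u - x ∈ adicUnion M n S}
      = ⋃ p ∈ S ×ˢ S, (Ico ((p.1 : ℝ) / c) (((p.1 : ℝ) + 1) / c) ∩
          Ioc (u - ((p.2 : ℝ) + 1) / c) (u - (p.2 : ℝ) / c)) := by
    ext x
    simp only [adicUnion, mem_inter_iff, mem_iUnion, mem_setOf_eq, Finset.mem_product,
      mem_Ico, mem_Ioc, ← hcdef, exists_prop]
    constructor
    · rintro ⟨⟨i, hi, h1, h2⟩, ⟨i', hi', h3, h4⟩⟩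
      exact ⟨(i, i'), ⟨hi, hi'⟩, ⟨h1, h2⟩, by constructor <;> linarith⟩
    · rintro ⟨⟨i, i'⟩, ⟨hi, hi'⟩, ⟨h1, h2⟩, h3, h4⟩
      exact ⟨⟨i, hi, h1, h2⟩, ⟨i', hi', by dsimp at h3 h4; constructor <;> linarith⟩⟩
  have hdisj : Set.PairwiseDisjoint (↑(S ×ˢ S) : Set (ℕ × ℕ))
      (fun p : ℕ × ℕ => Ico ((p.1 : ℝ) / c) (((p.1 : ℝ) + 1) / c) ∩
        Ioc (u - ((p.2 : ℝ) + 1) / c) (u - (p.2 : ℝ) / c)) := by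
    intro p _ q _ hpq
    have hstep : ∀ a b : ℕ, a < b → ((a : ℝ) + 1) / c ≤ (b : ℝ) / c := by
      intro a b hab
      exact (div_le_div_iff_of_pos_right hc).mpr (by exact_mod_cast hab)
    by_cases h1 : p.1 = q.1
    · have h2 : p.2 ≠ q.2 := fun h2 => hpq (Prod.ext h1 h2)
      refine Disjoint.mono inter_subset_right inter_subset_right ?_
      rw [Set.Ioc_disjoint_Ioc]
      rcases h2.lt_or_gt with h | h
      · have := hstep _ _ h
        calc min (u - (p.2 : ℝ) / c) (u - (q.2 : ℝ) / c) ≤ u - (q.2 : ℝ) / c :=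
              min_le_right _ _
          _ ≤ u - ((p.2 : ℝ) + 1) / c := by linarith
          _ ≤ _ := le_max_left _ _
      · have := hstep _ _ h
        calc min (u - (p.2 : ℝ) / c) (u - (q.2 : ℝ) / c) ≤ u - (p.2 : ℝ) / c :=
              min_le_left _ _
          _ ≤ u - ((q.2 : ℝ) + 1) / c := by linarith
          _ ≤ _ := le_max_right _ _
    · refine Disjoint.mono inter_subset_left inter_subset_left ?_
      rw [Set.Ico_disjoint_Ico]
      rcases (Ne.lt_or_gt h1) with h | h
      · exact le_trans (min_le_left _ _) (le_trans (hstep _ _ h) (le_max_right _ _))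
      · exact le_trans (min_le_right _ _) (le_trans (hstep _ _ h) (le_max_left _ _))
  have hsum : volume (adicUnion M n S ∩ {x : ℝ | u - x ∈ adicUnion M n S})
      = ∑ p ∈ S ×ˢ S, ENNReal.ofReal (if p.1 + p.2 = k then u - (k : ℝ) / c
          else if p.1 + p.2 + 1 = k then ((k : ℝ) + 1) / c - u else 0) := by
    rw [hdecomp, measure_biUnion_finset hdisj
      (fun p _ => (measurableSet_Ico.inter measurableSet_Ioc))]
    exact Finset.sum_congr rfl fun p _ => key_val c hc u k p.1 p.2 hu1 hu2
  have hval_nonneg : ∀ p : ℕ × ℕ, p ∈ S ×ˢ S →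
      (0 : ℝ) ≤ (if p.1 + p.2 = k then u - (k : ℝ) / c
        else if p.1 + p.2 + 1 = k then ((k : ℝ) + 1) / c - u else 0) := by
    intro p _
    split_ifs <;> linarith
  have hsum2 : (∑ p ∈ S ×ˢ S, ENNReal.ofReal (if p.1 + p.2 = k then u - (k : ℝ) / c
        else if p.1 + p.2 + 1 = k then ((k : ℝ) + 1) / c - u else 0))
      = ENNReal.ofReal (∑ p ∈ S ×ˢ S, (if p.1 + p.2 = k then u - (k : ℝ) / c
        else if p.1 + p.2 + 1 = k then ((k : ℝ) + 1) / c - u else 0)) :=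
    (ENNReal.ofReal_sum_of_nonneg hval_nonneg).symm
  have hsplit : (∑ p ∈ S ×ˢ S, (if p.1 + p.2 = k then u - (k : ℝ) / c
        else if p.1 + p.2 + 1 = k then ((k : ℝ) + 1) / c - u else 0))
      = (N₀ : ℝ) * (u - (k : ℝ) / c) + (N₁ : ℝ) * (((k : ℝ) + 1) / c - u) := by
    have : ∀ p : ℕ × ℕ, (if p.1 + p.2 = k then u - (k : ℝ) / c
        else if p.1 + p.2 + 1 = k then ((k : ℝ) + 1) / c - u else 0)
        = (if p.1 + p.2 = k then u - (k : ℝ) / c else 0) +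
          (if p.1 + p.2 + 1 = k then ((k : ℝ) + 1) / c - u else 0) := by
      intro p
      split_ifs <;> first | (exfalso; omega) | ring
    rw [Finset.sum_congr rfl fun p _ => this p, Finset.sum_add_distrib,
      ← Finset.sum_filter, ← Finset.sum_filter, Finset.sum_const, Finset.sum_const,
      ← hN₀, ← hN₁, nsmul_eq_mul, nsmul_eq_mul]
  have hnn : (0 : ℝ) ≤ (N₀ : ℝ) * (u - (k : ℝ) / c) + (N₁ : ℝ) * (((k : ℝ) + 1) / c - u) := by
    have h1 : (0:ℝ) ≤ (N₀ : ℝ) * (u - (k : ℝ) / c) :=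
      mul_nonneg (Nat.cast_nonneg _) (by linarith)
    have h2 : (0:ℝ) ≤ (N₁ : ℝ) * (((k : ℝ) + 1) / c - u) :=
      mul_nonneg (Nat.cast_nonneg _) (by linarith)
    linarith
  rw [Yfun, hmeas, hsum, hsum2, hsplit, ENNReal.toReal_ofReal hnn]
  ring
end

section
/- Let γ̃ ∈ (0,1] and let (Y_n)_{n∈ℕ} be a sequence of functions Y_n : [0,2] → [0,∞) such that: (a) |Y_n^u − Y^u| ≤ C M^{-nγ̃} for all n and u (where Y^u = lim_n Y_n^u exists), and (b) each Y_n is piecewise affine on M-adic intervals of generation n, with |Y_n^b − Y_n^a| ≤ C M^{n(1−γ_m)} M^{-n} whenever [a,b] is an M-adic interval of generation n and Y is γ_m-Hölder. Then, defining γ_0 = 0 and γ_{m+1} = γ̃/(1 + γ̃ − γ_m), the function u ↦ Y^u is Hölder continuous with exponent γ_{m+1} whenever it is Hölder with exponent γ_m; consequently Y is Hölder with every exponent γ < γ̃. -/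
open Set


private lemma piecewise_lip
    (M : ℕ) (hM : 2 ≤ M) (n : ℕ) (f : ℝ → ℝ) (L : ℝ) (hL : 0 ≤ L)
    (hloc : ∀ j : ℕ, j < 2 * M ^ n →
      ∀ u ∈ Icc ((j : ℝ) / (M : ℝ) ^ n) (((j : ℝ) + 1) / (M : ℝ) ^ n),
      ∀ v ∈ Icc ((j : ℝ) / (M : ℝ) ^ n) (((j : ℝ) + 1) / (M : ℝ) ^ n),
        |f u - f v| ≤ L * |u - v|) :
    ∀ u ∈ Icc (0 : ℝ) 2, ∀ v ∈ Icc (0 : ℝ) 2, |f u - f v| ≤ L * |u - v| := by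
  have hMpos : (0 : ℝ) < (M : ℝ) ^ n := by positivity
  have key : ∀ k : ℕ, ∀ u v : ℝ, 0 ≤ u → u ≤ v → v ≤ 2 → v ≤ (k : ℝ) / (M : ℝ) ^ n →
      |f v - f u| ≤ L * (v - u) := by
    intro k
    induction k with
    | zero =>
      intro u v hu huv hv2 hvk
      simp only [Nat.cast_zero, zero_div] at hvk
      have hv0 : v = 0 := le_antisymm hvk (le_trans hu huv)
      have hu0 : u = 0 := le_antisymm (hv0 ▸ huv) hu
      simp [hv0, hu0]
    | succ k ih =>
      intro u v hu huv hv2 hvk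
      by_cases hcase : v ≤ (k : ℝ) / (M : ℝ) ^ n
      · exact ih u v hu huv hv2 hcase
      push_neg at hcase
      have hklt : k < 2 * M ^ n := by
        have h1 : (k : ℝ) < 2 * (M : ℝ) ^ n := by
          have := lt_of_lt_of_le hcase hv2
          rw [div_lt_iff₀ hMpos] at this
          linarith
        have h2 : (k : ℝ) < ((2 * M ^ n : ℕ) : ℝ) := by push_cast; linarith
        exact_mod_cast h2
      have hvk' : v ≤ ((k : ℝ) + 1) / (M : ℝ) ^ n := by
        have : ((k + 1 : ℕ) : ℝ) = (k : ℝ) + 1 := by push_cast; ring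
        rw [← this]; exact hvk
      by_cases hucase : (k : ℝ) / (M : ℝ) ^ n ≤ u
      · have := hloc k hklt v ⟨le_of_lt hcase, hvk'⟩ u ⟨hucase, le_trans huv hvk'⟩
        rwa [abs_of_nonneg (by linarith : (0:ℝ) ≤ v - u)] at this
      push_neg at hucase
      set w := (k : ℝ) / (M : ℝ) ^ n with hw
      have hw0 : 0 ≤ w := by positivity
      have hw2 : w ≤ 2 := le_trans (le_of_lt hcase) hv2
      have h1 : |f w - f u| ≤ L * (w - u) := ih u w hu (le_of_lt hucase) hw2 le_rfl
      have h2 : |f v - f w| ≤ L * (v - w) := by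
        have := hloc k hklt v ⟨le_of_lt hcase, hvk'⟩ w ⟨le_rfl, by
          rw [div_le_div_iff₀ hMpos hMpos]; nlinarith⟩
        rwa [abs_of_nonneg (by linarith : (0:ℝ) ≤ v - w)] at this
      calc |f v - f u| ≤ |f v - f w| + |f w - f u| := abs_sub_le _ _ _
        _ ≤ L * (v - w) + L * (w - u) := add_le_add h2 h1
        _ = L * (v - u) := by ring
  have main : ∀ u v : ℝ, u ∈ Icc (0:ℝ) 2 → v ∈ Icc (0:ℝ) 2 → u ≤ v →
      |f u - f v| ≤ L * |u - v| := by
    intro u v hu hv huv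
    have h2 : (2 : ℝ) = ((2 * M ^ n : ℕ) : ℝ) / (M : ℝ) ^ n := by
      push_cast; field_simp
    have := key (2 * M ^ n) u v hu.1 huv hv.2 (by rw [← h2]; exact hv.2)
    rw [abs_sub_comm, abs_of_nonpos (by linarith : u - v ≤ 0)]
    simpa using this
  intro u hu v hv
  rcases le_total u v with h | h
  · exact main u v hu hv h
  · rw [abs_sub_comm (f u), abs_sub_comm u]
    exact main v u hv hu h


private lemma rpow_aux {x : ℝ} (hx : 0 < x) (γ : ℝ) :
    x * x⁻¹ ^ γ = x ^ (1 - γ) := by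
  rw [Real.inv_rpow hx.le, ← Real.rpow_neg hx.le]
  nth_rewrite 1 [← Real.rpow_one x]
  rw [← Real.rpow_add hx]
  ring_nf

private lemma bootstrap
    (M : ℕ) (hM : 2 ≤ M)
    (γt : ℝ) (hγt0 : 0 < γt) (hγt1 : γt ≤ 1)
    (γ : ℝ) (hγ0 : 0 ≤ γ) (hγlt : γ < γt)
    (Yn : ℕ → ℝ → ℝ) (Y : ℝ → ℝ)
    (C : ℝ) (hC : 0 < C)
    (happrox : ∀ n, ∀ u ∈ Set.Icc (0 : ℝ) 2,
      |Yn n u - Y u| ≤ C * ((M : ℝ) ^ n) ⁻¹ ^ γt)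
    (haffine : ∀ n, ∀ j : ℕ, j < 2 * M ^ n → ∃ a b : ℝ,
      ∀ u ∈ Set.Icc ((j : ℝ) / (M : ℝ) ^ n) (((j : ℝ) + 1) / (M : ℝ) ^ n),
        Yn n u = a * u + b)
    (C₀ : ℝ) (hC₀ : 0 ≤ C₀)
    (hH : ∀ u ∈ Set.Icc (0 : ℝ) 2, ∀ v ∈ Set.Icc (0 : ℝ) 2,
      |Y u - Y v| ≤ C₀ * |u - v| ^ γ) :
    ∃ C' : ℝ, ∀ u ∈ Set.Icc (0 : ℝ) 2, ∀ v ∈ Set.Icc (0 : ℝ) 2,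
      |Y u - Y v| ≤ C' * |u - v| ^ (γt / (1 + γt - γ)) := by
  classical
  have hM1 : (1:ℝ) < (M:ℝ) := by exact_mod_cast lt_of_lt_of_le one_lt_two (by exact_mod_cast hM)
  have hM2 : (2:ℝ) ≤ (M:ℝ) := by exact_mod_cast hM
  set θ := 1 + γt - γ with hθdef
  have hθ : 1 < θ := by simp only [hθdef]; linarith
  have hθ0 : 0 < θ := by linarith
  set γ' := γt / θ with hγ'def
  have hγ'0 : 0 < γ' := div_pos hγt0 hθ0
  refine ⟨2*C + (2*C + C₀) * M, ?_⟩
  intro u hu v hv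
  rcases eq_or_ne u v with rfl | hne
  · simp [Real.zero_rpow (ne_of_gt hγ'0)]
  set d := |u - v| with hddef
  have hd : 0 < d := abs_pos.mpr (sub_ne_zero.mpr hne)
  have hd2 : d ≤ 2 := abs_sub_le_iff.2 ⟨by linarith [hu.1, hu.2, hv.1, hv.2],
    by linarith [hu.1, hu.2, hv.1, hv.2]⟩
  have hdθ : 0 < d ^ (1/θ) := Real.rpow_pos_of_pos hd _
  -- choose n
  have hex : ∃ n : ℕ, ((M:ℝ) ^ n)⁻¹ ≤ d ^ (1/θ) := by
    obtain ⟨n, hn⟩ := exists_pow_lt_of_lt_one hdθ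
      (by rw [inv_lt_one_iff₀]; right; exact hM1 : (M:ℝ)⁻¹ < 1)
    exact ⟨n, by rw [← inv_pow]; exact hn.le⟩
  set n := Nat.find hex with hndef
  have hQ : ((M:ℝ) ^ n)⁻¹ ≤ d ^ (1/θ) := Nat.find_spec hex
  set x := (M:ℝ) ^ n with hxdef
  have hx0 : (0:ℝ) < x := by positivity
  have hx1 : (1:ℝ) ≤ x := one_le_pow₀ hM1.le
  have hX : x ≤ (M:ℝ) * d ^ (-(1/θ)) := by
    have hdneg : d ^ (-(1/θ)) = (d ^ (1/θ))⁻¹ := Real.rpow_neg hd.le _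
    rcases Nat.eq_zero_or_pos n with h0 | hpos
    · have hd12 : d ^ (1/θ) ≤ 2 := by
        calc d ^ (1/θ) ≤ 2 ^ (1/θ) := Real.rpow_le_rpow hd.le hd2 (by positivity)
          _ ≤ 2 ^ (1:ℝ) := Real.rpow_le_rpow_of_exponent_le one_le_two
            (by rw [div_le_one hθ0]; linarith)
          _ = 2 := Real.rpow_one 2
      simp only [hxdef, h0, pow_zero, hdneg]
      calc (1:ℝ) ≤ (M:ℝ) / (d ^ (1/θ)) := by
            rw [le_div_iff₀ hdθ, one_mul]; exact le_trans hd12 hM2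
        _ = (M:ℝ) * (d ^ (1/θ))⁻¹ := by ring
    · obtain ⟨k, hk⟩ := Nat.exists_eq_succ_of_ne_zero (Nat.pos_iff_ne_zero.mp hpos)
      have hmin : ¬ ((M:ℝ) ^ k)⁻¹ ≤ d ^ (1/θ) := Nat.find_min hex (by omega)
      push_neg at hmin
      have hMk : (0:ℝ) < (M:ℝ) ^ k := by positivity
      have h1 : (M:ℝ) ^ k < (d ^ (1/θ))⁻¹ := by
        rw [lt_inv_comm₀ hdθ hMk] at hmin
        exact hmin
      calc x = (M:ℝ) * (M:ℝ) ^ k := by rw [hxdef, hk, pow_succ]; ring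
        _ ≤ (M:ℝ) * (d ^ (1/θ))⁻¹ := by
            apply mul_le_mul_of_nonneg_left h1.le (by positivity)
        _ = (M:ℝ) * d ^ (-(1/θ)) := by rw [hdneg]
  -- abbreviations
  set A := x⁻¹ ^ γt with hAdef
  set B := x⁻¹ ^ γ with hBdef
  have hA0 : 0 ≤ A := Real.rpow_nonneg (by positivity) _
  have hB0 : 0 ≤ B := Real.rpow_nonneg (by positivity) _
  set Dn := 2*C*A + C₀*B with hDndef
  have hDn0 : 0 ≤ Dn := by positivity
  -- local Lipschitz for Yn n with constant L = x * Dn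
  set L := x * Dn with hLdef
  have hL0 : 0 ≤ L := by positivity
  have hloc : ∀ j : ℕ, j < 2 * M ^ n →
      ∀ u' ∈ Icc ((j : ℝ) / (M : ℝ) ^ n) (((j : ℝ) + 1) / (M : ℝ) ^ n),
      ∀ v' ∈ Icc ((j : ℝ) / (M : ℝ) ^ n) (((j : ℝ) + 1) / (M : ℝ) ^ n),
        |Yn n u' - Yn n v'| ≤ L * |u' - v'| := by
    intro j hj
    obtain ⟨a, b, hab⟩ := haffine n j hj
    set p := (j : ℝ) / (M : ℝ) ^ n with hpdef
    set q := ((j : ℝ) + 1) / (M : ℝ) ^ n with hqdef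
    have hpq : q - p = x⁻¹ := by
      rw [hpdef, hqdef, div_sub_div_same, hxdef]; simp
    have hple : p ≤ q := by
      rw [hpdef, hqdef]
      apply div_le_div_of_nonneg_right (by linarith) (by positivity)
    have hp2 : p ∈ Icc (0:ℝ) 2 := by
      constructor
      · rw [hpdef]; positivity
      · rw [hpdef, div_le_iff₀ hx0]
        have : (j:ℝ) ≤ ((2 * M ^ n : ℕ) : ℝ) := by exact_mod_cast hj.le
        push_cast at this
        rw [hxdef]; nlinarith [hx0]
    have hq2 : q ∈ Icc (0:ℝ) 2 := by
      constructor
      · rw [hqdef]; positivity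
      · rw [hqdef, div_le_iff₀ hx0]
        have : (j:ℝ) + 1 ≤ ((2 * M ^ n : ℕ) : ℝ) := by
          have : j + 1 ≤ 2 * M ^ n := hj
          exact_mod_cast this
        push_cast at this
        rw [hxdef]; nlinarith [hx0]
    have hqp : |q - p| = x⁻¹ := by
      rw [hpq, abs_of_nonneg (by positivity)]
    have hend : |Yn n q - Yn n p| ≤ Dn := by
      calc |Yn n q - Yn n p| ≤ |Yn n q - Y q| + |Y q - Yn n p| := abs_sub_le _ _ _
        _ ≤ |Yn n q - Y q| + (|Y q - Y p| + |Y p - Yn n p|) := by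
            linarith [abs_sub_le (Y q) (Y p) (Yn n p)]
        _ ≤ C * A + (C₀ * x⁻¹ ^ γ + C * A) := by
            have t1 := happrox n q hq2
            have t2 := hH q hq2 p hp2
            have t3 := happrox n p hp2
            rw [abs_sub_comm] at t3
            rw [hqp] at t2
            rw [hAdef, hxdef]
            exact add_le_add t1 (add_le_add t2 t3)
        _ = Dn := by rw [hDndef, hBdef]; ring
    have hslope : |a| ≤ L := by
      have h1 : Yn n p = a * p + b := hab p ⟨le_rfl, hple⟩
      have h2 : Yn n q = a * q + b := hab q ⟨hple, le_rfl⟩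
      have h3 : |a| * x⁻¹ ≤ Dn := by
        have : Yn n q - Yn n p = a * (q - p) := by rw [h1, h2]; ring
        calc |a| * x⁻¹ = |a * (q - p)| := by
              rw [abs_mul, hpq, abs_of_nonneg (by positivity : (0:ℝ) ≤ x⁻¹)]
          _ = |Yn n q - Yn n p| := by rw [this]
          _ ≤ Dn := hend
      rw [hLdef]
      calc |a| = |a| * x⁻¹ * x := by field_simp
        _ ≤ Dn * x := mul_le_mul_of_nonneg_right h3 hx0.le
        _ = x * Dn := by ring
    intro u' hu' v' hv'
    have : Yn n u' - Yn n v' = a * (u' - v') := by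
      rw [hab u' hu', hab v' hv']; ring
    rw [this, abs_mul]
    exact mul_le_mul_of_nonneg_right hslope (abs_nonneg _)
  have hlip := piecewise_lip M hM n (Yn n) L hL0 hloc
  -- key exponent bounds
  have hA : A ≤ d ^ γ' := by
    calc A = x⁻¹ ^ γt := hAdef
      _ ≤ (d ^ (1/θ)) ^ γt := Real.rpow_le_rpow (by positivity) hQ hγt0.le
      _ = d ^ (1/θ * γt) := by rw [← Real.rpow_mul hd.le]
      _ = d ^ γ' := by rw [hγ'def]; ring_nf
  have hAB : A ≤ B := by
    rw [hAdef, hBdef]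
    rcases eq_or_lt_of_le hx1 with h | h
    · rw [← h]; simp
    · exact Real.rpow_le_rpow_of_exponent_ge (by positivity)
        (inv_le_one_of_one_le₀ hx1) hγlt.le
  have hdxB : d * (x * B) ≤ (M:ℝ) * d ^ γ' := by
    have hxB : x * B = x ^ (1 - γ) := by rw [hBdef]; exact rpow_aux hx0 γ
    have h1 : x ^ (1 - γ) ≤ ((M:ℝ) * d ^ (-(1/θ))) ^ (1 - γ) :=
      Real.rpow_le_rpow hx0.le hX (by linarith)
    have h2 : ((M:ℝ) * d ^ (-(1/θ))) ^ (1 - γ)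
        = (M:ℝ) ^ (1 - γ) * d ^ (-(1/θ) * (1 - γ)) := by
      rw [Real.mul_rpow (by positivity) (by positivity), ← Real.rpow_mul hd.le]
    have h3 : (M:ℝ) ^ (1 - γ) ≤ (M:ℝ) := by
      calc (M:ℝ) ^ (1 - γ) ≤ (M:ℝ) ^ (1:ℝ) :=
        Real.rpow_le_rpow_of_exponent_le hM1.le (by linarith)
        _ = (M:ℝ) := Real.rpow_one _
    have h4 : d * d ^ (-(1/θ) * (1 - γ)) = d ^ γ' := by
      nth_rewrite 1 [← Real.rpow_one d]
      rw [← Real.rpow_add hd]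
      congr 1
      rw [hγ'def, hθdef]
      have hθne : (1 + γt - γ) ≠ 0 := by linarith
      rw [one_div, neg_mul, inv_mul_eq_div, eq_div_iff hθne, add_mul, neg_mul, div_mul_cancel₀ _ hθne]; ring
    calc d * (x * B) = d * x ^ (1 - γ) := by rw [hxB]
      _ ≤ d * ((M:ℝ) ^ (1 - γ) * d ^ (-(1/θ) * (1 - γ))) := by
          rw [h2] at h1
          exact mul_le_mul_of_nonneg_left h1 hd.le
      _ = (M:ℝ) ^ (1 - γ) * (d * d ^ (-(1/θ) * (1 - γ))) := by ring
      _ = (M:ℝ) ^ (1 - γ) * d ^ γ' := by rw [h4]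
      _ ≤ (M:ℝ) * d ^ γ' := mul_le_mul_of_nonneg_right h3 (by positivity)
  have hdxA : d * (x * A) ≤ d * (x * B) := by
    apply mul_le_mul_of_nonneg_left _ hd.le
    exact mul_le_mul_of_nonneg_left hAB hx0.le
  -- assemble
  have t1 : |Y u - Yn n u| ≤ C * A := by
    rw [abs_sub_comm]; rw [hAdef, hxdef]; exact happrox n u hu
  have t2 : |Yn n v - Y v| ≤ C * A := by
    rw [hAdef, hxdef]; exact happrox n v hv
  have t3 : |Yn n u - Yn n v| ≤ L * d := by
    rw [hddef]; exact hlip u hu v hv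
  have tri : |Y u - Y v| ≤ C * A + L * d + C * A := by
    calc |Y u - Y v| ≤ |Y u - Yn n u| + |Yn n u - Y v| := abs_sub_le _ _ _
      _ ≤ |Y u - Yn n u| + (|Yn n u - Yn n v| + |Yn n v - Y v|) := by
          linarith [abs_sub_le (Yn n u) (Yn n v) (Y v)]
      _ ≤ C * A + (L * d + C * A) := add_le_add t1 (add_le_add t3 t2)
      _ = C * A + L * d + C * A := by ring
  have hLd : L * d = 2*C*(d*(x*A)) + C₀*(d*(x*B)) := by
    rw [hLdef, hDndef]; ring
  have e1 : C * A ≤ C * d ^ γ' := mul_le_mul_of_nonneg_left hA hC.le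
  have e2 : 2*C*(d*(x*A)) ≤ 2*C*((M:ℝ) * d ^ γ') :=
    mul_le_mul_of_nonneg_left (hdxA.trans hdxB) (by positivity)
  have e3 : C₀*(d*(x*B)) ≤ C₀*((M:ℝ) * d ^ γ') :=
    mul_le_mul_of_nonneg_left hdxB hC₀
  calc |Y u - Y v| ≤ C * A + L * d + C * A := tri
    _ = 2*(C*A) + (2*C*(d*(x*A)) + C₀*(d*(x*B))) := by rw [hLd]; ring
    _ ≤ 2*(C * d ^ γ') + (2*C*((M:ℝ) * d ^ γ') + C₀*((M:ℝ) * d ^ γ')) := by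
        linarith
    _ = (2*C + (2*C + C₀) * M) * d ^ γ' := by ring



/-- **Hölder bootstrap.** Suppose `Y_n → Y` uniformly on `[0,2]` at rate
`C·M^{-nγ̃}`, each `Y_n` is affine on generation-`n` `M`-adic intervals, and `Y` is
bounded. Define `γ_0 = 0`, `γ_{m+1} = γ̃/(1+γ̃−γ_m)`. Then `Y` is `γ_{m+1}`-Hölder on
`[0,2]` whenever it is `γ_m`-Hölder; consequently `Y` is `γ`-Hölder for every `γ < γ̃`. -/
theorem holder_bootstrap
    (M : ℕ) (hM : 2 ≤ M)
    (γt : ℝ) (hγt0 : 0 < γt) (hγt1 : γt ≤ 1)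
    (Yn : ℕ → ℝ → ℝ) (Y : ℝ → ℝ)
    (hnonneg : ∀ n, ∀ u ∈ Set.Icc (0 : ℝ) 2, 0 ≤ Yn n u)
    (C : ℝ) (hC : 0 < C)
    (happrox : ∀ n, ∀ u ∈ Set.Icc (0 : ℝ) 2,
      |Yn n u - Y u| ≤ C * ((M : ℝ) ^ n) ⁻¹ ^ γt)
    (haffine : ∀ n, ∀ j : ℕ, j < 2 * M ^ n → ∃ a b : ℝ,
      ∀ u ∈ Set.Icc ((j : ℝ) / (M : ℝ) ^ n) (((j : ℝ) + 1) / (M : ℝ) ^ n),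
        Yn n u = a * u + b)
    (hbound : ∃ B : ℝ, ∀ u ∈ Set.Icc (0 : ℝ) 2, |Y u| ≤ B)
    (γseq : ℕ → ℝ) (hγ0 : γseq 0 = 0)
    (hγrec : ∀ m, γseq (m + 1) = γt / (1 + γt - γseq m)) :
    (∀ m : ℕ,
      (∃ C' : ℝ, ∀ u ∈ Set.Icc (0 : ℝ) 2, ∀ v ∈ Set.Icc (0 : ℝ) 2,
        |Y u - Y v| ≤ C' * |u - v| ^ (γseq m)) →
      (∃ C' : ℝ, ∀ u ∈ Set.Icc (0 : ℝ) 2, ∀ v ∈ Set.Icc (0 : ℝ) 2,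
        |Y u - Y v| ≤ C' * |u - v| ^ (γseq (m + 1)))) ∧
    (∀ γ : ℝ, 0 < γ → γ < γt →
      ∃ C' : ℝ, ∀ u ∈ Set.Icc (0 : ℝ) 2, ∀ v ∈ Set.Icc (0 : ℝ) 2,
        |Y u - Y v| ≤ C' * |u - v| ^ γ) := by
    -- basic properties of γseq
  have aux1 : ∀ m, 0 ≤ γseq m ∧ γseq m < γt := by
    intro m
    induction m with
    | zero => exact ⟨le_of_eq hγ0.symm, hγ0 ▸ hγt0⟩
    | succ m ih =>
      obtain ⟨h0, hlt⟩ := ih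
      have hden : 1 < 1 + γt - γseq m := by linarith
      rw [hγrec m]
      constructor
      · positivity
      · rw [div_lt_iff₀ (by linarith)]
        nlinarith
  -- the bootstrap step
  have part1 : ∀ m : ℕ,
      (∃ C' : ℝ, ∀ u ∈ Set.Icc (0 : ℝ) 2, ∀ v ∈ Set.Icc (0 : ℝ) 2,
        |Y u - Y v| ≤ C' * |u - v| ^ (γseq m)) →
      (∃ C' : ℝ, ∀ u ∈ Set.Icc (0 : ℝ) 2, ∀ v ∈ Set.Icc (0 : ℝ) 2,
        |Y u - Y v| ≤ C' * |u - v| ^ (γseq (m + 1))) := by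
    intro m ⟨C₀, hC₀⟩
    obtain ⟨h0m, hmlt⟩ := aux1 m
    rw [hγrec m]
    refine bootstrap M hM γt hγt0 hγt1 (γseq m) h0m hmlt Yn Y C hC happrox haffine
      (max C₀ 0) (le_max_right _ _) ?_
    intro u hu v hv
    exact (hC₀ u hu v hv).trans (mul_le_mul_of_nonneg_right (le_max_left _ _)
      (Real.rpow_nonneg (abs_nonneg _) _))
  refine ⟨part1, ?_⟩
  -- Y is γseq m - Hölder for every m
  have hhold : ∀ m, ∃ C' : ℝ, ∀ u ∈ Set.Icc (0 : ℝ) 2, ∀ v ∈ Set.Icc (0 : ℝ) 2,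
      |Y u - Y v| ≤ C' * |u - v| ^ (γseq m) := by
    intro m
    induction m with
    | zero =>
      obtain ⟨B, hB⟩ := hbound
      refine ⟨2 * B, ?_⟩
      intro u hu v hv
      rw [hγ0, Real.rpow_zero, mul_one]
      calc |Y u - Y v| ≤ |Y u| + |Y v| := abs_sub _ _
        _ ≤ B + B := add_le_add (hB u hu) (hB v hv)
        _ = 2 * B := by ring
    | succ m ih => exact part1 m ih
  -- quantitative convergence: m * (γt - γseq m) ≤ 1
  have aux2 : ∀ m : ℕ, (m : ℝ) * (γt - γseq m) ≤ 1 := by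
    intro m
    induction m with
    | zero => simp
    | succ m ih =>
      obtain ⟨h0, hlt⟩ := aux1 m
      set ε := γt - γseq m with hεdef
      have hε : 0 < ε := by simp only [hεdef]; linarith
      have h1ε : 0 < 1 + ε := by linarith
      have hrw : γt - γseq (m + 1) = γt * ε / (1 + ε) := by
        rw [hγrec m]
        have : 1 + γt - γseq m = 1 + ε := by rw [hεdef]; ring
        rw [this]
        field_simp
        ring
      have hre : (↑(m+1) : ℝ) * (γt * ε / (1 + ε)) = (↑(m+1) * (γt * ε)) / (1 + ε) := by
        ring
      rw [hrw, hre, div_le_one h1ε]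
      push_cast
      nlinarith [mul_nonneg (mul_nonneg (by positivity : (0:ℝ) ≤ (m:ℝ) + 1) hε.le)
        (by linarith : (0:ℝ) ≤ 1 - γt), Nat.cast_nonneg (α := ℝ) m]
  -- conclusion for arbitrary γ < γt
  intro γ hγpos hγlt
  have hδ : 0 < γt - γ := by linarith
  obtain ⟨m, hm⟩ := exists_nat_gt (1 / (γt - γ))
  have hmpos : (0:ℝ) < (m : ℝ) := lt_trans (by positivity) hm
  have h1 : γt - γseq m ≤ 1 / (m : ℝ) := by
    have := aux2 m
    rw [le_div_iff₀ hmpos]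
    linarith [aux2 m]
  have h2 : 1 / (m : ℝ) < γt - γ := by
    rw [div_lt_iff₀ hmpos]
    rw [div_lt_iff₀ hδ] at hm
    linarith
  have hγm : γ < γseq m := by linarith
  obtain ⟨C₀, hC₀⟩ := hhold m
  obtain ⟨h0m, hmlt⟩ := aux1 m
  refine ⟨2 * max C₀ 0, ?_⟩
  intro u hu v hv
  rcases eq_or_ne u v with rfl | hne
  · simp [Real.zero_rpow (ne_of_gt hγpos)]
  set d := |u - v| with hddef
  have hd : 0 < d := abs_pos.mpr (sub_ne_zero.mpr hne)
  have hd2 : d ≤ 2 := abs_sub_le_iff.2 ⟨by linarith [hu.1, hu.2, hv.1, hv.2],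
    by linarith [hu.1, hu.2, hv.1, hv.2]⟩
  have key : d ^ (γseq m) ≤ 2 * d ^ γ := by
    have e1 : d ^ (γseq m) = d ^ γ * d ^ (γseq m - γ) := by
      rw [← Real.rpow_add hd]; ring_nf
    have e2 : d ^ (γseq m - γ) ≤ 2 := by
      calc d ^ (γseq m - γ) ≤ 2 ^ (γseq m - γ) :=
            Real.rpow_le_rpow hd.le hd2 (by linarith)
        _ ≤ 2 ^ (1:ℝ) := Real.rpow_le_rpow_of_exponent_le one_le_two (by linarith)
        _ = 2 := Real.rpow_one 2
    calc d ^ (γseq m) = d ^ γ * d ^ (γseq m - γ) := e1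
      _ ≤ d ^ γ * 2 := mul_le_mul_of_nonneg_left e2 (Real.rpow_nonneg hd.le _)
      _ = 2 * d ^ γ := by ring
  calc |Y u - Y v| ≤ C₀ * d ^ (γseq m) := hC₀ u hu v hv
    _ ≤ max C₀ 0 * d ^ (γseq m) :=
        mul_le_mul_of_nonneg_right (le_max_left _ _) (Real.rpow_nonneg hd.le _)
    _ ≤ max C₀ 0 * (2 * d ^ γ) := mul_le_mul_of_nonneg_left key (le_max_right _ _)
    _ = 2 * max C₀ 0 * d ^ γ := by ring
end

section
/- Let M ≥ 2 be even, n ≥ 1, and suppose A ⊆ [0,1] is a set such that for every n and every M-adic interval Q of generation n intersecting A, the set of generation-(n+1) children of Q intersecting A corresponds to a translate E + a (mod M) of a fixed set E ⊆ ℤ_M, where E contains no 3-term arithmetic progression in ℤ_M and all elements of E are even. If moreover A contains no endpoint of any M-adic interval, then A contains no 3-term arithmetic progression y_1 < y_2 < y_3 with y_2 = (y_1+y_3)/2. -/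
open Set

/-- Let `M` be even, and let `E ⊆ ℤ_M` be free of 3-term arithmetic
progressions with all elements even. If `A ⊆ [0,1]` is such that, at every scale, the
children of each `M`-adic interval meeting `A` are exactly those whose digits lie in a
translate `E + a (mod M)`, and `A` contains no endpoint of an `M`-adic interval, then
`A` contains no 3-term arithmetic progression. -/
theorem no_three_term_AP
    (M : ℕ) (hM2 : 2 ≤ M) (hMeven : Even M)
    (E : Set (ZMod M))
    (hE3 : ∀ a r : ZMod M, r ≠ 0 → ¬(a ∈ E ∧ a + r ∈ E ∧ a + 2 * r ∈ E))
    (hEeven : ∀ e ∈ E, ∃ k : ℕ, Even k ∧ (k : ZMod M) = e)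
    (A : Set ℝ) (hA : A ⊆ Set.Icc (0 : ℝ) 1)
    (hchildren : ∀ n j : ℕ, j < M ^ n →
      (A ∩ Set.Ico ((j : ℝ) / (M : ℝ) ^ n) (((j : ℝ) + 1) / (M : ℝ) ^ n)).Nonempty →
      ∃ a : ZMod M, ∀ k : ℕ, k < M →
        ((A ∩ Set.Ico (((j : ℝ) * M + k) / (M : ℝ) ^ (n + 1))
            (((j : ℝ) * M + k + 1) / (M : ℝ) ^ (n + 1))).Nonempty ↔
          ∃ e ∈ E, e + a = (k : ZMod M)))
    (hnoend : ∀ x ∈ A, ∀ n j : ℕ, x ≠ (j : ℝ) / (M : ℝ) ^ n) :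
    ¬ ∃ y₁ y₂ y₃ : ℝ, y₁ ∈ A ∧ y₂ ∈ A ∧ y₃ ∈ A ∧
        y₁ < y₂ ∧ y₂ < y₃ ∧ y₂ = (y₁ + y₃) / 2 := by
  rintro ⟨y₁, y₂, y₃, hy₁, hy₂, hy₃, h12, h23, hap⟩
  haveI : NeZero M := ⟨by omega⟩
  have hc1 : (1:ℝ) < (M:ℝ) := by exact_mod_cast (by omega : 1 < M)
  have hc0 : (0:ℝ) < (M:ℝ) := by linarith
  have hy₁0 : 0 ≤ y₁ := (hA hy₁).1
  have hy₂0 : 0 ≤ y₂ := (hA hy₂).1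
  have hy₃0 : 0 ≤ y₃ := (hA hy₃).1
  have hy₃1 : y₃ < 1 := by
    refine lt_of_le_of_ne (hA hy₃).2 ?_
    have := hnoend y₃ hy₃ 0 1
    simpa using this
  have hy₁1 : y₁ < 1 := by linarith
  -- floor of x * M^n
  have hfle : ∀ (n : ℕ) (x : ℝ), 0 ≤ x →
      ((⌊x * (M:ℝ)^n⌋₊ : ℝ)) ≤ x * (M:ℝ)^n := by
    intro n x hx
    exact Nat.floor_le (by positivity)
  have hflt : ∀ (n : ℕ) (x : ℝ), x * (M:ℝ)^n < (⌊x * (M:ℝ)^n⌋₊ : ℝ) + 1 := by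
    intro n x
    exact Nat.lt_floor_add_one _
  have hmono : ∀ (n : ℕ) (x y : ℝ), x ≤ y → ⌊x * (M:ℝ)^n⌋₊ ≤ ⌊y * (M:ℝ)^n⌋₊ := by
    intro n x y hxy
    exact Nat.floor_mono (mul_le_mul_of_nonneg_right hxy (by positivity))
  -- digit structure
  have hdig : ∀ (n : ℕ) (x : ℝ), 0 ≤ x →
      M * ⌊x * (M:ℝ)^n⌋₊ ≤ ⌊x * (M:ℝ)^(n+1)⌋₊ ∧
      ⌊x * (M:ℝ)^(n+1)⌋₊ < M * ⌊x * (M:ℝ)^n⌋₊ + M := by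
    intro n x hx
    constructor
    · rw [Nat.le_floor_iff (by positivity)]
      have h := hfle n x hx
      have : (M:ℝ) * (⌊x * (M:ℝ)^n⌋₊ : ℝ) ≤ (M:ℝ) * (x * (M:ℝ)^n) :=
        mul_le_mul_of_nonneg_left h (le_of_lt hc0)
      push_cast
      calc ((M:ℝ)) * (⌊x * (M:ℝ)^n⌋₊ : ℝ) ≤ (M:ℝ) * (x * (M:ℝ)^n) := this
        _ = x * (M:ℝ)^(n+1) := by ring
    · rw [Nat.floor_lt (by positivity)]
      have h := hflt n x
      have : (M:ℝ) * (x * (M:ℝ)^n) < (M:ℝ) * ((⌊x * (M:ℝ)^n⌋₊ : ℝ) + 1) :=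
        mul_lt_mul_of_pos_left h hc0
      push_cast
      calc x * (M:ℝ)^(n+1) = (M:ℝ) * (x * (M:ℝ)^n) := by ring
        _ < (M:ℝ) * ((⌊x * (M:ℝ)^n⌋₊ : ℝ) + 1) := this
        _ = (M:ℝ) * (⌊x * (M:ℝ)^n⌋₊ : ℝ) + (M:ℝ) := by ring
  -- there is a generation separating y₁ and y₃
  have key : ∃ n : ℕ, ⌊y₁ * (M:ℝ)^n⌋₊ ≠ ⌊y₃ * (M:ℝ)^n⌋₊ := by
    obtain ⟨n, hn⟩ := pow_unbounded_of_one_lt (1 / (y₃ - y₁)) hc1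
    refine ⟨n, fun heq => ?_⟩
    have hd : (1:ℝ) < (y₃ - y₁) * (M:ℝ)^n := by
      rw [div_lt_iff₀ (by linarith)] at hn
      nlinarith
    have h1 : (⌊y₁ * (M:ℝ)^n⌋₊ : ℝ) + 1 ≤ y₃ * (M:ℝ)^n := by
      have := hfle n y₁ hy₁0
      nlinarith
    have h2 := hflt n y₃
    rw [heq] at h1
    linarith
  set n := Nat.find key with hn_def
  have hnspec : ⌊y₁ * (M:ℝ)^n⌋₊ ≠ ⌊y₃ * (M:ℝ)^n⌋₊ := Nat.find_spec key
  have hn0 : n ≠ 0 := by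
    intro h
    apply hnspec
    rw [h]
    simp only [pow_zero, mul_one]
    rw [Nat.floor_eq_zero.mpr hy₁1, Nat.floor_eq_zero.mpr hy₃1]
  obtain ⟨m, hm⟩ : ∃ m, n = m + 1 := ⟨n - 1, by omega⟩
  have hminm : ⌊y₁ * (M:ℝ)^m⌋₊ = ⌊y₃ * (M:ℝ)^m⌋₊ := by
    have hmlt : m < n := by omega
    have := Nat.find_min key (show m < Nat.find key from hmlt)
    exact not_ne_iff.mp this
  set j := ⌊y₁ * (M:ℝ)^m⌋₊ with hj_def
  have hj2 : ⌊y₂ * (M:ℝ)^m⌋₊ = j := by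
    have h1 := hmono m y₁ y₂ (le_of_lt h12)
    have h2 := hmono m y₂ y₃ (le_of_lt h23)
    omega
  have hjlt : j < M ^ m := by
    rw [hj_def, Nat.floor_lt (by positivity)]
    push_cast
    nlinarith [pow_pos hc0 m]
  have hmemj : y₁ ∈ Set.Ico ((j:ℝ) / (M:ℝ)^m) (((j:ℝ)+1) / (M:ℝ)^m) := by
    have hp : (0:ℝ) < (M:ℝ)^m := by positivity
    constructor
    · rw [div_le_iff₀ hp]
      exact hfle m y₁ hy₁0
    · rw [lt_div_iff₀ hp]
      exact hflt m y₁
  obtain ⟨a, ha⟩ := hchildren m j hjlt ⟨y₁, hy₁, hmemj⟩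
  -- extract digit data for each point
  have main : ∀ y : ℝ, y ∈ A → 0 ≤ y → ⌊y * (M:ℝ)^m⌋₊ = j →
      ∃ e ∈ E, ∃ k : ℕ, k < M ∧ ⌊y * (M:ℝ)^(m+1)⌋₊ = M * j + k ∧ e + a = (k : ZMod M) := by
    intro y hyA hy0 hjy
    obtain ⟨hd1, hd2⟩ := hdig m y hy0
    rw [hjy] at hd1 hd2
    set N := ⌊y * (M:ℝ)^(m+1)⌋₊ with hN_def
    set k := N - M * j with hk_def
    have hk : N = M * j + k := by omega
    have hkM : k < M := by omega
    have hNcast : ((j:ℝ) * M + k) = (N:ℝ) := by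
      rw [hk]; push_cast; ring
    have hp : (0:ℝ) < (M:ℝ)^(m+1) := by positivity
    have hmem : y ∈ Set.Ico (((j:ℝ) * M + k) / (M:ℝ)^(m+1)) (((j:ℝ) * M + k + 1) / (M:ℝ)^(m+1)) := by
      constructor
      · rw [div_le_iff₀ hp, hNcast]
        exact hfle (m+1) y hy0
      · rw [lt_div_iff₀ hp]
        have := hflt (m+1) y
        rw [hNcast]
        linarith
    obtain ⟨e, he, hea⟩ := (ha k hkM).mp ⟨y, hyA, hmem⟩
    exact ⟨e, he, k, hkM, hk, hea⟩
  obtain ⟨e₁, he₁, k₁, hk₁M, hN₁, hea₁⟩ := main y₁ hy₁ hy₁0 rfl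
  obtain ⟨e₂, he₂, k₂, hk₂M, hN₂, hea₂⟩ := main y₂ hy₂ hy₂0 hj2
  obtain ⟨e₃, he₃, k₃, hk₃M, hN₃, hea₃⟩ := main y₃ hy₃ hy₃0 hminm.symm
  -- parity: k₁ + k₃ is even
  have h2M : (2:ℕ) ∣ M := hMeven.two_dvd
  let φ : ZMod M →+* ZMod 2 := ZMod.castHom h2M (ZMod 2)
  have hzero : ∀ e ∈ E, φ e = 0 := by
    intro e he
    obtain ⟨t, ht, hcast⟩ := hEeven e he
    rw [← hcast]
    have : (t : ZMod 2) = 0 := (ZMod.natCast_eq_zero_iff t 2).mpr ht.two_dvd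
    simpa [φ] using this
  have hk1par : (k₁ : ZMod 2) = φ a := by
    have := congrArg φ hea₁
    rw [map_add, hzero e₁ he₁, zero_add, map_natCast] at this
    exact this.symm
  have hk3par : (k₃ : ZMod 2) = φ a := by
    have := congrArg φ hea₃
    rw [map_add, hzero e₃ he₃, zero_add, map_natCast] at this
    exact this.symm
  have hpar : (2:ℕ) ∣ k₁ + k₃ := by
    rw [← ZMod.natCast_eq_zero_iff]
    push_cast
    rw [hk1par, hk3par]
    exact CharTwo.add_self_eq_zero _
  -- 2*k₂ ≠ k₁ + k₃
  have hne' : ⌊y₁ * (M:ℝ)^(m+1)⌋₊ ≠ ⌊y₃ * (M:ℝ)^(m+1)⌋₊ := by rw [← hm]; exact hnspec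
  have hne2 : 2 * k₂ ≠ k₁ + k₃ := by
    intro hcon
    have hz : ((2 * k₂ : ℕ) : ZMod M) = ((k₁ + k₃ : ℕ) : ZMod M) := by rw [hcon]
    push_cast at hz
    rw [← hea₁, ← hea₂, ← hea₃] at hz
    have heq : e₁ + e₃ = 2 * e₂ := by linear_combination -hz
    by_cases hr : e₂ - e₁ = 0
    · have he12 : e₁ = e₂ := by linear_combination -hr
      have hk12 : (k₁ : ZMod M) = (k₂ : ZMod M) := by
        rw [← hea₁, ← hea₂, he12]
      have hk12' : k₁ = k₂ := by
        have := congrArg ZMod.val hk12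
        rwa [ZMod.val_cast_of_lt hk₁M, ZMod.val_cast_of_lt hk₂M] at this
      apply hne'
      rw [hN₁, hN₃]
      omega
    · refine hE3 e₁ (e₂ - e₁) hr ⟨he₁, ?_, ?_⟩
      · rw [show e₁ + (e₂ - e₁) = e₂ by ring]; exact he₂
      · rw [show e₁ + 2 * (e₂ - e₁) = e₃ by linear_combination -heq]; exact he₃
  -- real inequalities
  set N₁ := ⌊y₁ * (M:ℝ)^(m+1)⌋₊
  set N₂ := ⌊y₂ * (M:ℝ)^(m+1)⌋₊
  set N₃ := ⌊y₃ * (M:ℝ)^(m+1)⌋₊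
  have hl₂ : (N₂ : ℝ) ≤ y₂ * (M:ℝ)^(m+1) := hfle (m+1) y₂ hy₂0
  have hu₁ : y₁ * (M:ℝ)^(m+1) < (N₁ : ℝ) + 1 := hflt (m+1) y₁
  have hu₃ : y₃ * (M:ℝ)^(m+1) < (N₃ : ℝ) + 1 := hflt (m+1) y₃
  have hl₁ : (N₁ : ℝ) ≤ y₁ * (M:ℝ)^(m+1) := hfle (m+1) y₁ hy₁0
  have hl₃ : (N₃ : ℝ) ≤ y₃ * (M:ℝ)^(m+1) := hfle (m+1) y₃ hy₃0
  have hu₂ : y₂ * (M:ℝ)^(m+1) < (N₂ : ℝ) + 1 := hflt (m+1) y₂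
  have h2y : y₁ * (M:ℝ)^(m+1) + y₃ * (M:ℝ)^(m+1) = 2 * (y₂ * (M:ℝ)^(m+1)) := by
    rw [hap]; ring
  have h1R : (2 * N₂ : ℝ) < (N₁ : ℝ) + (N₃ : ℝ) + 2 := by linarith
  have h2R : (N₁ : ℝ) + (N₃ : ℝ) < 2 * (N₂ : ℝ) + 2 := by linarith
  have h1 : 2 * N₂ < N₁ + N₃ + 2 := by exact_mod_cast h1R
  have h2 : N₁ + N₃ < 2 * N₂ + 2 := by exact_mod_cast h2R
  rw [hN₁] at h1 h2
  rw [hN₂] at h1 h2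
  rw [hN₃] at h1 h2
  omega
end

section
/- (Behrend) For every c' > 0 there exists c > 0 such that for all sufficiently large N, there exists a set E ⊆ {1,…,N} with no 3-term arithmetic progressions and |E| ≥ exp(−c√(log N))·N; in particular, for every ε > 0 and all sufficiently large N there is a progression-free subset of {1,…,N} of size at least N^{1−ε}. -/
open Filter

lemma behrend_aux : ∀ N : ℕ, ∃ E : Finset ℕ,
    E ⊆ Finset.Icc 1 N ∧
    (∀ a r : ℕ, 0 < r → ¬(a ∈ E ∧ a + r ∈ E ∧ a + 2 * r ∈ E)) ∧
    Real.exp (-4 * Real.sqrt (Real.log N)) * N ≤ E.card := by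
  intro N
  obtain ⟨t, hts, htcard, htfree⟩ := rothNumberNat_spec N
  refine ⟨t.image (· + 1), ?_, ?_, ?_⟩
  · intro x hx
    simp only [Finset.mem_image] at hx
    obtain ⟨y, hy, rfl⟩ := hx
    have := Finset.mem_range.1 (hts hy)
    simp [Finset.mem_Icc]; omega
  · rintro a r hr ⟨ha, hb, hc⟩
    simp only [Finset.mem_image] at ha hb hc
    obtain ⟨x, hx, hx'⟩ := ha
    obtain ⟨y, hy, hy'⟩ := hb
    obtain ⟨z, hz, hz'⟩ := hc
    have hxz : x + z = y + y := by omega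
    have := htfree hx hy hz hxz
    omega
  · rw [Finset.card_image_of_injective _ (add_left_injective 1), htcard]
    calc Real.exp (-4 * Real.sqrt (Real.log N)) * N
        = (N : ℝ) * Real.exp (-4 * Real.sqrt (Real.log N)) := by ring
      _ ≤ rothNumberNat N := Behrend.roth_lower_bound

/-- **Behrend.** There exists `c > 0` such that for all sufficiently large
`N` there is a set `E ⊆ {1,…,N}` with no 3-term arithmetic progression and
`|E| ≥ exp(−c√(log N))·N`; in particular, for every `ε > 0` and all sufficiently large
`N` there is a progression-free subset of `{1,…,N}` of size at least `N^{1−ε}`. -/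
theorem behrend_progression_free_sets :
    (∃ c : ℝ, 0 < c ∧ ∀ᶠ N : ℕ in atTop, ∃ E : Finset ℕ,
      E ⊆ Finset.Icc 1 N ∧
      (∀ a r : ℕ, 0 < r → ¬(a ∈ E ∧ a + r ∈ E ∧ a + 2 * r ∈ E)) ∧
      Real.exp (-c * Real.sqrt (Real.log N)) * N ≤ E.card) ∧
    (∀ ε : ℝ, 0 < ε → ∀ᶠ N : ℕ in atTop, ∃ E : Finset ℕ,
      E ⊆ Finset.Icc 1 N ∧
      (∀ a r : ℕ, 0 < r → ¬(a ∈ E ∧ a + r ∈ E ∧ a + 2 * r ∈ E)) ∧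
      (N : ℝ) ^ (1 - ε) ≤ E.card) := by
  constructor
  · exact ⟨4, by norm_num, Eventually.of_forall behrend_aux⟩
  · intro ε hε
    have hlog : Tendsto (fun N : ℕ => Real.log N) atTop atTop :=
      Real.tendsto_log_atTop.comp tendsto_natCast_atTop_atTop
    filter_upwards [hlog.eventually_ge_atTop ((4 / ε) ^ 2), eventually_ge_atTop 1]
      with N hN hN1
    obtain ⟨E, hE1, hE2, hE3⟩ := behrend_aux N
    refine ⟨E, hE1, hE2, le_trans ?_ hE3⟩
    have hNpos : (0 : ℝ) < N := by exact_mod_cast hN1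
    have hlogpos : (0 : ℝ) ≤ Real.log N := le_trans (by positivity) hN
    have hsq : 4 / ε ≤ Real.sqrt (Real.log N) := by
      rw [show (4:ℝ)/ε = Real.sqrt ((4/ε)^2) from (Real.sqrt_sq (by positivity)).symm]
      exact Real.sqrt_le_sqrt hN
    have key : 4 * Real.sqrt (Real.log N) ≤ ε * Real.log N := by
      have h1 : Real.sqrt (Real.log N) * Real.sqrt (Real.log N) = Real.log N :=
        Real.mul_self_sqrt hlogpos
      have h2 : ε * (4 / ε) ≤ ε * Real.sqrt (Real.log N) :=
        mul_le_mul_of_nonneg_left hsq hε.le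
      have h3 : ε * (4 / ε) = 4 := by field_simp
      calc 4 * Real.sqrt (Real.log N) ≤ ε * Real.sqrt (Real.log N) * Real.sqrt (Real.log N) := by
            nlinarith [Real.sqrt_nonneg (Real.log N)]
        _ = ε * Real.log N := by rw [mul_assoc, h1]
    rw [Real.rpow_def_of_pos hNpos]
    have : Real.exp (-4 * Real.sqrt (Real.log N)) * N
        = Real.exp (-4 * Real.sqrt (Real.log N) + Real.log N) := by
      rw [Real.exp_add, Real.exp_log hNpos]
    rw [this]
    apply Real.exp_le_exp.2
    nlinarith [key]
end

section
/- If A ⊆ ℝ contains a homothetic image of every m-element subset of ℝ (m ≥ 3), then dim_H(A^m) ≥ m − 2 and dim_P(A) ≥ 1 − 2/m, where dim_P denotes packing dimension. -/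
open Set Filter
open scoped ENNReal

/-- Number of dyadic intervals of generation `n` meeting `A`. -/
noncomputable def covN (A : Set ℝ) (n : ℕ) : ℕ :=
  {k : ℤ | (A ∩ Set.Ico ((k : ℝ) / 2 ^ n) (((k : ℝ) + 1) / 2 ^ n)).Nonempty}.ncard

/-- Upper box-counting (Minkowski) dimension of a set of reals. -/
noncomputable def upperBoxDim (A : Set ℝ) : ℝ :=
  Filter.limsup (fun n : ℕ => Real.log (covN A n) / (n * Real.log 2)) atTop

/-- Packing dimension, via the countable-cover regularization of upper box dimension. -/
noncomputable def packDim (A : Set ℝ) : ℝ :=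
  sInf {s : ℝ | ∃ F : ℕ → Set ℝ, (A ⊆ ⋃ n, F n) ∧
    ∀ n, Bornology.IsBounded (F n) ∧ upperBoxDim (F n) ≤ s}


set_option maxHeartbeats 1000000

open Topology MeasureTheory

namespace S18

def hset (A : Set ℝ) (n : ℕ) : Set ℤ :=
  {k : ℤ | (A ∩ Set.Ico ((k : ℝ) / 2 ^ n) (((k : ℝ) + 1) / 2 ^ n)).Nonempty}

lemma covN_eq (A : Set ℝ) (n : ℕ) : covN A n = (hset A n).ncard := rfl

lemma mem_hset_floor {A : Set ℝ} {n : ℕ} {k : ℤ} (hk : k ∈ hset A n) :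
    ∃ x ∈ A, k = ⌊x * 2 ^ n⌋ := by
  obtain ⟨x, hxA, hx1, hx2⟩ := hk
  refine ⟨x, hxA, ?_⟩
  have h2 : (0:ℝ) < 2 ^ n := by positivity
  rw [div_le_iff₀ h2] at hx1
  rw [lt_div_iff₀ h2] at hx2
  symm
  rw [Int.floor_eq_iff]
  exact ⟨by exact_mod_cast hx1, by push_cast; linarith⟩

lemma mem_hset_of_mem {A : Set ℝ} {n : ℕ} {x : ℝ} (hx : x ∈ A) :
    ⌊x * 2 ^ n⌋ ∈ hset A n := by
  have h2 : (0:ℝ) < 2 ^ n := by positivity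
  refine ⟨x, hx, ?_, ?_⟩
  · rw [div_le_iff₀ h2]; exact Int.floor_le _
  · rw [lt_div_iff₀ h2]; push_cast; exact Int.lt_floor_add_one _

lemma hset_subset {A : Set ℝ} {R : ℝ} (hA : A ⊆ Set.Icc (-R) R) (n : ℕ) :
    hset A n ⊆ Set.Icc ⌊(-R) * 2 ^ n⌋ ⌊R * 2 ^ n⌋ := by
  intro k hk
  obtain ⟨x, hxA, hk⟩ := mem_hset_floor hk
  obtain ⟨h1, h2⟩ := hA hxA
  subst hk
  have h2n : (0:ℝ) < 2 ^ n := by positivity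
  exact ⟨Int.floor_le_floor (by nlinarith), Int.floor_le_floor (by nlinarith)⟩

lemma bounded_subset_Icc {A : Set ℝ} (hA : Bornology.IsBounded A) :
    ∃ R : ℝ, 0 ≤ R ∧ A ⊆ Set.Icc (-R) R := by
  obtain ⟨R, hR⟩ := hA.subset_closedBall 0
  refine ⟨max R 0, le_max_right _ _, fun x hx => ?_⟩
  have h := abs_le.mp (by simpa [Metric.mem_closedBall, Real.dist_eq] using hR hx)
  constructor
  · have : -(max R 0) ≤ -R := neg_le_neg (le_max_left _ _)
    linarith [h.1]
  · exact h.2.trans (le_max_left _ _)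

lemma hset_finite {A : Set ℝ} (hA : Bornology.IsBounded A) (n : ℕ) :
    (hset A n).Finite := by
  obtain ⟨R, _, hsub⟩ := bounded_subset_Icc hA
  exact (Set.finite_Icc _ _).subset (hset_subset hsub n)

lemma covN_le {A : Set ℝ} {R : ℝ} (hR : 0 ≤ R) (hA : A ⊆ Set.Icc (-R) R) (n : ℕ) :
    (covN A n : ℝ) ≤ (2 * R + 2) * 2 ^ n := by
  have hsub := hset_subset hA n
  set a := ⌊(-R) * 2 ^ n⌋
  set b := ⌊R * 2 ^ n⌋
  have h2n : (1:ℝ) ≤ 2 ^ n := one_le_pow₀ (by norm_num)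
  have h2n0 : (0:ℝ) < 2 ^ n := by positivity
  have hab : a ≤ b := Int.floor_le_floor (by nlinarith)
  have hcard : covN A n ≤ (Set.Icc a b).ncard := by
    rw [covN_eq]
    exact Set.ncard_le_ncard hsub (Set.finite_Icc _ _)
  have hIcc : (Set.Icc a b).ncard = (b + 1 - a).toNat := by
    rw [← Finset.coe_Icc, Set.ncard_coe_finset, Int.card_Icc]
  have hfl1 : (b : ℝ) ≤ R * 2 ^ n := Int.floor_le _
  have hfl2 : (-R) * 2 ^ n - 1 < (a : ℝ) := Int.sub_one_lt_floor _
  calc (covN A n : ℝ) ≤ ((b + 1 - a).toNat : ℝ) := by exact_mod_cast hcard.trans_eq hIcc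
    _ = ((b : ℝ) + 1 - a) := by
        rw [← Int.cast_natCast, Int.toNat_of_nonneg (by omega)]; push_cast; ring
    _ ≤ (2 * R + 2) * 2 ^ n := by nlinarith

lemma cover_lemma (A : Set ℝ) (n : ℕ) :
    A ⊆ ⋃ k ∈ hset A n, Set.Ico ((k : ℝ) / 2 ^ n) (((k : ℝ) + 1) / 2 ^ n) := by
  intro x hx
  have h2 : (0:ℝ) < 2 ^ n := by positivity
  refine Set.mem_biUnion (mem_hset_of_mem (n := n) hx) ?_
  constructor
  · rw [div_le_iff₀ h2]; exact Int.floor_le _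
  · rw [lt_div_iff₀ h2]; push_cast; exact Int.lt_floor_add_one _

/-- The sequence whose limsup defines `upperBoxDim`. -/
noncomputable def u (A : Set ℝ) (n : ℕ) : ℝ := Real.log (covN A n) / (n * Real.log 2)

lemma upperBoxDim_eq (A : Set ℝ) : upperBoxDim A = Filter.limsup (u A) atTop := rfl

lemma u_nonneg (A : Set ℝ) (n : ℕ) : 0 ≤ u A n := by
  apply div_nonneg
  · exact Real.log_natCast_nonneg _
  · positivity

lemma log_covN_le {A : Set ℝ} {R : ℝ} (hR : 0 ≤ R) (hA : A ⊆ Set.Icc (-R) R) (n : ℕ) :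
    Real.log (covN A n) ≤ Real.log (2 * R + 2) + n * Real.log 2 := by
  have h2n : (1:ℝ) ≤ 2 ^ n := one_le_pow₀ (by norm_num)
  have h1 : Real.log (covN A n) ≤ Real.log ((2 * R + 2) * 2 ^ n) := by
    rcases Nat.eq_zero_or_pos (covN A n) with h | h
    · rw [h]
      simpa using Real.log_nonneg (by nlinarith)
    · apply Real.log_le_log (by exact_mod_cast h)
      exact covN_le hR hA n
  calc Real.log (covN A n) ≤ Real.log ((2 * R + 2) * 2 ^ n) := h1
    _ = Real.log (2 * R + 2) + n * Real.log 2 := by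
        rw [Real.log_mul (by nlinarith) (by positivity), Real.log_pow]

lemma u_bddAbove {A : Set ℝ} {R : ℝ} (hR : 0 ≤ R) (hA : A ⊆ Set.Icc (-R) R) (n : ℕ) :
    u A n ≤ Real.log (2 * R + 2) / Real.log 2 + 1 := by
  have hlog2 : (0:ℝ) < Real.log 2 := Real.log_pos (by norm_num)
  have hC : 0 ≤ Real.log (2 * R + 2) := Real.log_nonneg (by linarith)
  rcases Nat.eq_zero_or_pos n with h | h
  · subst h; simp [u]; positivity
  · have hn : (1:ℝ) ≤ n := by exact_mod_cast h
    rw [u, div_le_iff₀ (by positivity)]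
    have hlog := log_covN_le hR hA n
    have h2 : Real.log (2 * R + 2) ≤ Real.log (2 * R + 2) / Real.log 2 * (n * Real.log 2) := by
      rw [div_mul_eq_mul_div, le_div_iff₀ hlog2]
      nlinarith [mul_nonneg (mul_nonneg hC (sub_nonneg.mpr hn)) hlog2.le]
    nlinarith

lemma isBoundedUnder_u {A : Set ℝ} (hA : Bornology.IsBounded A) :
    IsBoundedUnder (· ≤ ·) atTop (u A) := by
  obtain ⟨R, hR0, hsub⟩ := bounded_subset_Icc hA
  exact Filter.isBoundedUnder_of ⟨Real.log (2 * R + 2) / Real.log 2 + 1,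
    fun n => u_bddAbove hR0 hsub n⟩

lemma upperBoxDim_le_two {A : Set ℝ} (hA : Bornology.IsBounded A) :
    upperBoxDim A ≤ 2 := by
  obtain ⟨R, hR0, hsub⟩ := bounded_subset_Icc hA
  have hlog2 : (0:ℝ) < Real.log 2 := Real.log_pos (by norm_num)
  rw [upperBoxDim_eq]
  apply Filter.limsup_le_of_le
  · exact Filter.isCoboundedUnder_le_of_le atTop (fun n => u_nonneg A n)
  · have : ∀ᶠ n : ℕ in atTop, Real.log (2*R+2) / Real.log 2 ≤ (n : ℝ) := by
      obtain ⟨N, hN⟩ := exists_nat_ge (Real.log (2*R+2) / Real.log 2)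
      filter_upwards [eventually_ge_atTop N] with n hn
      exact hN.trans (by exact_mod_cast hn)
    filter_upwards [this, eventually_ge_atTop 1] with n hn hn1
    have hn' : (1:ℝ) ≤ n := by exact_mod_cast hn1
    rw [u, div_le_iff₀ (by positivity)]
    have hlog := log_covN_le hR0 hsub n
    have : Real.log (2*R+2) ≤ n * Real.log 2 := by
      rw [div_le_iff₀ hlog2] at hn; linarith
    nlinarith

lemma eventually_covN_le {A : Set ℝ} {s s₁ : ℝ} (hA : Bornology.IsBounded A)
    (h : upperBoxDim A ≤ s) (h1 : s < s₁) :
    ∀ᶠ n : ℕ in atTop, (covN A n : ℝ) ≤ 2 ^ ((n : ℝ) * s₁) := by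
  have hev : ∀ᶠ n : ℕ in atTop, u A n < s₁ := by
    apply Filter.eventually_lt_of_limsup_lt _ (isBoundedUnder_u hA)
    exact lt_of_le_of_lt h h1
  have hlog2 : (0:ℝ) < Real.log 2 := Real.log_pos (by norm_num)
  filter_upwards [hev, eventually_ge_atTop 1] with n hn hn1
  have hn' : (0:ℝ) < n := by exact_mod_cast hn1
  rcases Nat.eq_zero_or_pos (covN A n) with h0 | h0
  · rw [h0]; simp only [Nat.cast_zero]; positivity
  · rw [u, div_lt_iff₀ (by positivity)] at hn
    have hx : (0:ℝ) < covN A n := by exact_mod_cast h0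
    rw [Real.rpow_def_of_pos (by norm_num : (0:ℝ) < 2)]
    rw [← Real.exp_log hx]
    apply le_of_lt
    apply Real.exp_lt_exp.mpr
    nlinarith

lemma dimH_pi_le {m : ℕ} (B : Fin m → Set ℝ) (hB : ∀ i, Bornology.IsBounded (B i))
    {s₁ d : ℝ} (h0 : 0 ≤ s₁) (hd : (m : ℝ) * s₁ < d)
    (hcov : ∀ i, ∀ᶠ n : ℕ in atTop, (covN (B i) n : ℝ) ≤ 2 ^ ((n : ℝ) * s₁)) :
    dimH {x : Fin m → ℝ | ∀ i, x i ∈ B i} ≤ ENNReal.ofReal d := by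
  classical
  have hd0 : 0 < d := lt_of_le_of_lt (by positivity) hd
  set S' := {x : Fin m → ℝ | ∀ i, x i ∈ B i} with hS'
  set t : ℕ → (Fin m → ℤ) → Set (Fin m → ℝ) := fun n φ =>
    if (∀ i, φ i ∈ hset (B i) n) then
      {x | ∀ i, x i ∈ Set.Ico ((φ i : ℝ) / 2 ^ n) (((φ i : ℝ) + 1) / 2 ^ n)}
    else ∅ with ht_def
  set r : ℕ → ℝ≥0∞ := fun n => ENNReal.ofReal ((2 : ℝ) ^ n)⁻¹ with hr_def
  have hrt : Tendsto r atTop (𝓝 0) := by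
    have h1 : Tendsto (fun n : ℕ => ((2 : ℝ) ^ n)⁻¹) atTop (𝓝 0) := by
      simp only [← inv_pow]
      exact tendsto_pow_atTop_nhds_zero_of_lt_one (by norm_num) (by norm_num)
    have h2 := (ENNReal.continuous_ofReal.tendsto 0).comp h1
    rw [ENNReal.ofReal_zero] at h2; exact h2
  have hdiam : ∀ n φ, EMetric.diam (t n φ) ≤ r n := by
    intro n φ
    by_cases h : ∀ i, φ i ∈ hset (B i) n
    · simp only [ht_def, if_pos h]
      apply EMetric.diam_le
      intro x hx y hy
      rw [edist_pi_le_iff]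
      intro i
      rw [edist_dist, Real.dist_eq]
      apply ENNReal.ofReal_le_ofReal
      have hxi := hx i
      have hyi := hy i
      have h2n : (0:ℝ) < 2 ^ n := by positivity
      have key : ((φ i : ℝ) + 1) / 2 ^ n - (φ i : ℝ) / 2 ^ n = ((2:ℝ)^n)⁻¹ := by
        rw [div_sub_div_same]; ring_nf
      have : |x i - y i| < ((2:ℝ)^n)⁻¹ := by
        rw [abs_sub_lt_iff]
        constructor <;> nlinarith [hxi.1, hxi.2, hyi.1, hyi.2]
      exact this.le
    · simp only [ht_def, if_neg h, EMetric.diam_empty]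
      rw [show EMetric.diam (∅ : Set (Fin m → ℝ)) = 0 from EMetric.diam_empty]; exact zero_le
  have hcover : ∀ n : ℕ, S' ⊆ ⋃ φ : Fin m → ℤ, t n φ := by
    intro n x hx
    refine Set.mem_iUnion.2 ⟨fun i => ⌊x i * 2 ^ n⌋, ?_⟩
    have hmem : ∀ i, ⌊x i * 2 ^ n⌋ ∈ hset (B i) n := fun i => mem_hset_of_mem (hx i)
    simp only [ht_def, if_pos hmem]
    intro i
    have h2n : (0:ℝ) < 2 ^ n := by positivity
    constructor
    · rw [div_le_iff₀ h2n]; exact Int.floor_le _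
    · rw [lt_div_iff₀ h2n]; push_cast; exact Int.lt_floor_add_one _
  have hμ : μH[d] S' ≤ liminf (fun n => ∑' φ : Fin m → ℤ, EMetric.diam (t n φ) ^ d) atTop :=
    MeasureTheory.Measure.hausdorffMeasure_le_liminf_tsum d S' r hrt t
      (Eventually.of_forall hdiam) (Eventually.of_forall hcover)
  -- bound the tsum
  have hbound : ∀ᶠ n : ℕ in atTop,
      (∑' φ : Fin m → ℤ, EMetric.diam (t n φ) ^ d)
        ≤ ENNReal.ofReal (((2:ℝ) ^ (s₁ * m - d)) ^ n) := by
    filter_upwards [eventually_all.2 hcov] with n hn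
    set G : Finset (Fin m → ℤ) :=
      Fintype.piFinset (fun i => (hset_finite (hB i) n).toFinset) with hG
    have hsupp : ∀ φ ∉ G, EMetric.diam (t n φ) ^ d = 0 := by
      intro φ hφ
      have : ¬ ∀ i, φ i ∈ hset (B i) n := by
        intro hall
        exact hφ (Fintype.mem_piFinset.2 fun i => (hset_finite (hB i) n).mem_toFinset.2 (hall i))
      simp only [ht_def, if_neg this, EMetric.diam_empty]
      rw [show EMetric.diam (∅ : Set (Fin m → ℝ)) = 0 from EMetric.diam_empty]
      exact ENNReal.zero_rpow_of_pos hd0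
    rw [tsum_eq_sum hsupp]
    have hterm : ∀ φ ∈ G, EMetric.diam (t n φ) ^ d ≤ (r n) ^ d := by
      intro φ _
      exact ENNReal.rpow_le_rpow (hdiam n φ) hd0.le
    calc ∑ φ ∈ G, EMetric.diam (t n φ) ^ d ≤ G.card • (r n) ^ d :=
          Finset.sum_le_card_nsmul _ _ _ hterm
      _ = (G.card : ℝ≥0∞) * (r n) ^ d := nsmul_eq_mul _ _
      _ ≤ ENNReal.ofReal (((2:ℝ) ^ (s₁ * m - d)) ^ n) := by
          have hcard : G.card = ∏ i, covN (B i) n := by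
            rw [hG, Fintype.card_piFinset]
            exact Finset.prod_congr rfl fun i _ =>
              (Set.ncard_eq_toFinset_card _ (hset_finite (hB i) n)).symm
          have hrpow : (r n) ^ d = ENNReal.ofReal (((2:ℝ) ^ n)⁻¹ ^ d) := by
            rw [hr_def]
            exact ENNReal.ofReal_rpow_of_pos (by positivity)
          rw [hcard, hrpow, ← ENNReal.ofReal_natCast, ← ENNReal.ofReal_mul (by positivity)]
          apply ENNReal.ofReal_le_ofReal
          -- real inequality
          have hprod : ((∏ i, covN (B i) n : ℕ) : ℝ) ≤ (2:ℝ) ^ ((n:ℝ) * s₁ * m) := by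
            push_cast
            calc (∏ i : Fin m, (covN (B i) n : ℝ)) ≤ ∏ _i : Fin m, (2:ℝ) ^ ((n:ℝ) * s₁) :=
                  Finset.prod_le_prod (fun i _ => by positivity) (fun i _ => hn i)
              _ = ((2:ℝ) ^ ((n:ℝ) * s₁)) ^ (m : ℕ) := by
                  rw [Finset.prod_const, Finset.card_univ, Fintype.card_fin]
              _ = (2:ℝ) ^ ((n:ℝ) * s₁ * m) := by
                  rw [← Real.rpow_natCast ((2:ℝ) ^ ((n:ℝ) * s₁)) m, ← Real.rpow_mul (by norm_num)]
          have hinv : ((2:ℝ) ^ n)⁻¹ ^ d = (2:ℝ) ^ (-(n:ℝ) * d) := by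
            rw [← Real.rpow_natCast (2:ℝ) n, ← Real.rpow_neg (by norm_num), ← Real.rpow_mul (by norm_num)]
          rw [hinv]
          have hw' : ((2:ℝ) ^ (s₁ * m - d)) ^ n = (2:ℝ) ^ (((s₁ * m - d)) * n) := by
            rw [← Real.rpow_natCast ((2:ℝ) ^ (s₁ * m - d)) n, ← Real.rpow_mul (by norm_num)]
          rw [hw']
          calc ((∏ i, covN (B i) n : ℕ) : ℝ) * (2:ℝ) ^ (-(n:ℝ) * d)
              ≤ (2:ℝ) ^ ((n:ℝ) * s₁ * m) * (2:ℝ) ^ (-(n:ℝ) * d) := by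
                apply mul_le_mul_of_nonneg_right hprod (by positivity)
            _ = (2:ℝ) ^ ((s₁ * m - d) * n) := by
                rw [← Real.rpow_add (by norm_num)]
                ring_nf
            _ ≤ (2:ℝ) ^ ((s₁ * m - d) * n) := le_rfl
  have hw0 : Tendsto (fun n : ℕ => ENNReal.ofReal (((2:ℝ) ^ (s₁ * m - d)) ^ n)) atTop (𝓝 0) := by
    have h1 : Tendsto (fun n : ℕ => ((2:ℝ) ^ (s₁ * m - d)) ^ n) atTop (𝓝 0) := by
      apply tendsto_pow_atTop_nhds_zero_of_lt_one
      · positivity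
      · rw [← Real.rpow_zero 2]
        exact Real.rpow_lt_rpow_of_exponent_lt (by norm_num) (by linarith)
    have h2 := (ENNReal.continuous_ofReal.tendsto 0).comp h1
    rw [ENNReal.ofReal_zero] at h2; exact h2
  have hliminf : liminf (fun n => ∑' φ : Fin m → ℤ, EMetric.diam (t n φ) ^ d) atTop = 0 := by
    apply le_antisymm _ (zero_le)
    calc liminf (fun n => ∑' φ : Fin m → ℤ, EMetric.diam (t n φ) ^ d) atTop
        ≤ liminf (fun n : ℕ => ENNReal.ofReal (((2:ℝ) ^ (s₁ * m - d)) ^ n)) atTop :=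
          liminf_le_liminf hbound
      _ = 0 := hw0.liminf_eq
  have hμ0 : μH[d] S' = 0 := le_antisymm (hμ.trans hliminf.le) (zero_le)
  have hdim : dimH S' ≤ (d.toNNReal : ℝ≥0∞) := by
    apply dimH_le_of_hausdorffMeasure_ne_top
    rw [Real.coe_toNNReal d hd0.le, hμ0]
    exact ENNReal.zero_ne_top
  exact hdim.trans_eq rfl

lemma dimH_pattern_ge {m : ℕ} (hm : 3 ≤ m) (A : Set ℝ)
    (hA : ∀ F : Finset ℝ, F.card = m →
      ∃ lam t : ℝ, lam ≠ 0 ∧ (fun x => lam * x + t) '' (F : Set ℝ) ⊆ A) :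
    ((m - 2 : ℕ) : ℝ≥0∞) ≤ dimH {x : Fin m → ℝ | ∀ i, x i ∈ A} := by
  classical
  set i0 : Fin m := ⟨0, by omega⟩ with hi0
  set i1 : Fin m := ⟨1, by omega⟩ with hi1
  set ι : Fin (m-2) → Fin m := fun j => ⟨j.val + 2, by have := j.isLt; omega⟩ with hι
  set g : (Fin m → ℝ) → (Fin (m-2) → ℝ) :=
    fun x j => (x (ι j) - x i0) / (x i1 - x i0) with hg
  set S := {x : Fin m → ℝ | ∀ i, x i ∈ A} with hS
  set W := {x : Fin m → ℝ | x i1 - x i0 ≠ 0} with hW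
  -- Step 1 : g is locally Lipschitz on S ∩ W
  have h1 : dimH (g '' (S ∩ W)) ≤ dimH (S ∩ W) := by
    apply dimH_image_le_of_locally_lipschitzOn
    intro x hx
    have hx2 : x i1 - x i0 ≠ 0 := hx.2
    have hproj : ∀ k : Fin m, ContDiffAt ℝ 1 (fun y : Fin m → ℝ => y k) x := fun k =>
      (ContinuousLinearMap.proj (R := ℝ) (φ := fun _ : Fin m => ℝ) k).contDiff.contDiffAt
    have hc : ContDiffAt ℝ 1 g x := by
      rw [contDiffAt_pi]
      intro j
      exact ContDiffAt.div ((hproj (ι j)).sub (hproj i0)) ((hproj i1).sub (hproj i0)) hx2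
    obtain ⟨C, t, ht, hlip⟩ := hc.exists_lipschitzOnWith
    exact ⟨C, t, nhdsWithin_le_nhds ht, hlip⟩
  -- Step 2 : the ball is contained in the image
  set t₀ : Fin (m-2) → ℝ := fun j => (j : ℝ) + 2 with ht₀
  have hball : Metric.ball t₀ (1/2) ⊆ g '' (S ∩ W) := by
    intro t ht
    have htj : ∀ j, |t j - ((j : ℝ) + 2)| < 1/2 := by
      intro j
      have := (dist_pi_lt_iff (by norm_num : (0:ℝ) < 1/2)).1 (Metric.mem_ball.1 ht) j
      simpa [Real.dist_eq, ht₀] using this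
    have htlb : ∀ j : Fin (m-2), (j : ℝ) + 3/2 < t j := by
      intro j; have := (abs_lt.1 (htj j)).1; linarith
    have htub : ∀ j : Fin (m-2), t j < (j : ℝ) + 5/2 := by
      intro j; have := (abs_lt.1 (htj j)).2; linarith
    set s : Fin m → ℝ := fun i =>
      if i.val = 0 then 0 else if i.val = 1 then 1
      else t ⟨i.val - 2, by have := i.isLt; omega⟩ with hs_def
    have hs0 : s i0 = 0 := by simp [hs_def, hi0]
    have hs1 : s i1 = 1 := by simp [hs_def, hi1]
    have hs_ge : ∀ i : Fin m, 2 ≤ i.val → s i = t ⟨i.val - 2, by have := i.isLt; omega⟩ := by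
      intro i h2
      simp only [hs_def]
      rw [if_neg (by omega), if_neg (by omega)]
    have hsι : ∀ j, s (ι j) = t j := by
      intro j
      exact hs_ge (ι j) (by simp [hι])
    have hsmono : ∀ i i' : Fin m, i.val < i'.val → s i < s i' := by
      intro i i' hlt
      rcases Nat.eq_zero_or_pos i.val with h0 | h0
      · -- s i = 0
        have hsi : s i = 0 := by simp [hs_def, h0]
        rw [hsi]
        rcases Nat.lt_or_ge i'.val 2 with h2 | h2
        · have : i'.val = 1 := by omega
          simp [hs_def, this]
        · have hs' : s i' = t ⟨i'.val - 2, by have := i'.isLt; omega⟩ := by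
            simp only [hs_def]; rw [if_neg (by omega), if_neg (by omega)]
          rw [hs']
          have := htlb ⟨i'.val - 2, by have := i'.isLt; omega⟩
          simp only [Fin.val_mk] at this
          have hc : (0:ℝ) ≤ ((i'.val - 2 : ℕ) : ℝ) := by positivity
          linarith
      · rcases Nat.lt_or_ge i.val 2 with h1 | h1
        · -- i.val = 1, s i = 1
          have hval : i.val = 1 := by omega
          have hsi : s i = 1 := by simp [hs_def, hval]
          have h2 : 2 ≤ i'.val := by omega
          rw [hsi, hs_ge i' (by omega)]
          have := htlb ⟨i'.val - 2, by have := i'.isLt; omega⟩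
          simp only [Fin.val_mk] at this
          have hc : (0:ℝ) ≤ ((i'.val - 2 : ℕ) : ℝ) := by positivity
          linarith
        · -- both ≥ 2
          have h2' : 2 ≤ i'.val := by omega
          rw [hs_ge i (by omega), hs_ge i' (by omega)]
          have hub := htub ⟨i.val - 2, by have := i.isLt; omega⟩
          have hlb := htlb ⟨i'.val - 2, by have := i'.isLt; omega⟩
          simp only [Fin.val_mk] at hub hlb
          have hcast : ((i.val - 2 : ℕ) : ℝ) + 1 ≤ ((i'.val - 2 : ℕ) : ℝ) := by
            have : i.val - 2 + 1 ≤ i'.val - 2 := by omega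
            exact_mod_cast this
          linarith
    have hinj : Function.Injective s := by
      intro a b hab
      by_contra hne
      rcases lt_trichotomy a.val b.val with h | h | h
      · exact absurd hab (ne_of_lt (hsmono a b h))
      · exact hne (Fin.ext h)
      · exact absurd hab.symm (ne_of_lt (hsmono b a h))
    set F : Finset ℝ := Finset.image s Finset.univ with hF
    have hcard : F.card = m := by
      rw [hF, Finset.card_image_of_injective _ hinj, Finset.card_univ, Fintype.card_fin]
    obtain ⟨lam, c, hlam, himg⟩ := hA F hcard
    set x : Fin m → ℝ := fun i => lam * s i + c with hx_def
    have hxS : x ∈ S := by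
      intro i
      apply himg
      exact ⟨s i, by simp [hF], rfl⟩
    have hd : x i1 - x i0 = lam := by
      simp [hx_def, hs0, hs1]
    have hxW : x ∈ W := by
      rw [hW, Set.mem_setOf_eq, hd]; exact hlam
    refine ⟨x, ⟨hxS, hxW⟩, ?_⟩
    funext j
    show (x (ι j) - x i0) / (x i1 - x i0) = t j
    rw [hd]
    have hnum : x (ι j) - x i0 = lam * t j := by
      simp [hx_def, hs0, hsι]
    rw [hnum, mul_div_assoc]
    field_simp
  -- Step 3 : conclude
  calc ((m - 2 : ℕ) : ℝ≥0∞) = dimH (Metric.ball t₀ (1/2)) :=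
        (Real.dimH_ball_pi_fin t₀ (by norm_num)).symm
    _ ≤ dimH (g '' (S ∩ W)) := dimH_mono hball
    _ ≤ dimH (S ∩ W) := h1
    _ ≤ dimH S := dimH_mono Set.inter_subset_left

end S18

/-- If `A ⊆ ℝ` contains a homothetic image of every `m`-element set
(`m ≥ 3`), then `dim_H(A^m) ≥ m − 2` and the packing dimension of `A` is at least
`1 − 2/m`. -/
theorem dim_of_universal_pattern_set
    (m : ℕ) (hm : 3 ≤ m) (A : Set ℝ)
    (hA : ∀ F : Finset ℝ, F.card = m →
      ∃ lam t : ℝ, lam ≠ 0 ∧ (fun x => lam * x + t) '' (F : Set ℝ) ⊆ A) :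
    (m : ℝ≥0∞) - 2 ≤ dimH {x : Fin m → ℝ | ∀ i, x i ∈ A} ∧
    1 - 2 / (m : ℝ) ≤ packDim A := by
  have hpart1 := S18.dimH_pattern_ge hm A hA
  have hcast : ((m - 2 : ℕ) : ℝ≥0∞) = (m : ℝ≥0∞) - 2 := by
    rw [ENNReal.natCast_sub]
    norm_num
  constructor
  · rw [← hcast]; exact hpart1
  · apply le_csInf
    · refine ⟨2, fun n => Set.Icc (-(n:ℝ)) n, ?_, ?_⟩
      · intro x _
        obtain ⟨n, hn⟩ := exists_nat_ge |x|
        have h := abs_le.1 hn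
        exact Set.mem_iUnion.2 ⟨n, h.1, h.2⟩
      · intro n
        exact ⟨Metric.isBounded_Icc _ _, S18.upperBoxDim_le_two (Metric.isBounded_Icc _ _)⟩
    · rintro sVal ⟨F, hFcov, hFprop⟩
      have hm3 : (3:ℝ) ≤ m := by exact_mod_cast hm
      have hmpos : (0:ℝ) < m := by linarith
      have hkey : ∀ s' : ℝ, max sVal 0 < s' → (m : ℝ) - 2 ≤ m * s' := by
        intro s' hs'
        have hmax0 : (0:ℝ) ≤ max sVal 0 := le_max_right _ _
        set s₁ := (max sVal 0 + s') / 2 with hs₁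
        have h01 : 0 ≤ s₁ := by simp only [hs₁]; linarith
        have hlt : sVal < s₁ := by
          have : sVal ≤ max sVal 0 := le_max_left _ _
          simp only [hs₁]; linarith
        have hs₁s' : s₁ < s' := by simp only [hs₁]; linarith
        have hmd : (m:ℝ) * s₁ < m * s' := by nlinarith
        have hdim : dimH {x : Fin m → ℝ | ∀ i, x i ∈ A} ≤ ENNReal.ofReal ((m:ℝ) * s') := by
          have hsub : {x : Fin m → ℝ | ∀ i, x i ∈ A} ⊆
              ⋃ φ : Fin m → ℕ, {x : Fin m → ℝ | ∀ i, x i ∈ F (φ i)} := by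
            intro x hx
            have h' : ∀ i, ∃ n, x i ∈ F n := fun i => Set.mem_iUnion.1 (hFcov (hx i))
            choose φ hφ using h'
            exact Set.mem_iUnion.2 ⟨φ, hφ⟩
          apply (dimH_mono hsub).trans
          rw [dimH_iUnion]
          apply iSup_le
          intro φ
          exact S18.dimH_pi_le (fun i => F (φ i)) (fun i => (hFprop (φ i)).1) h01 hmd
            (fun i => S18.eventually_covN_le (hFprop (φ i)).1 (hFprop (φ i)).2 hlt)
        have hcomb := hpart1.trans hdim
        rw [← ENNReal.ofReal_natCast (m-2)] at hcomb
        have hreal : ((m - 2 : ℕ) : ℝ) ≤ (m:ℝ) * s' :=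
          (ENNReal.ofReal_le_ofReal_iff (by nlinarith)).1 hcomb
        calc (m:ℝ) - 2 = ((m - 2 : ℕ) : ℝ) := by
              rw [Nat.cast_sub (by omega)]; norm_num
          _ ≤ (m:ℝ) * s' := hreal
      have hfin : (m:ℝ) - 2 ≤ m * max sVal 0 := by
        apply le_of_forall_pos_le_add
        intro ε hε
        have h := hkey (max sVal 0 + ε / m) (by
          have : 0 < ε / m := by positivity
          linarith)
        calc (m:ℝ) - 2 ≤ m * (max sVal 0 + ε / m) := h
          _ = m * max sVal 0 + ε := by field_simp
      have hge0 : 0 ≤ sVal := by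
        by_contra h
        push_neg at h
        rw [max_eq_right h.le] at hfin
        nlinarith
      rw [max_eq_left hge0] at hfin
      calc 1 - 2 / (m:ℝ) = ((m:ℝ) - 2) / m := by
            rw [sub_div, div_self hmpos.ne']
        _ ≤ sVal := by
            rw [div_le_iff₀ hmpos]
            nlinarith
end
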